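/- arXiv:1609.04040 — 2 statements merged into one kernel-verified Lean document; each statement's English description precedes it below -/
import Mathlib

section
/- For every finite metric space (X,d) and every τ > 0, there exists a random partition 𝒫 of X such that: (1) almost surely, every block S ∈ 𝒫 satisfies diam(S) < τ; and (2) for every x ∈ X, Pr[ B(x, ε(x)τ) ⊆ 𝒫(x) ] ≥ 1/2, where ε(x) = ( 32 · log( e·|B(x, 5τ/8)| / |B(x, τ/8)| ) )^{−1}. -/
open scoped Classical

noncomputable section

/-- `P : X → Set X` is a partition map of `X`: `P x` is the block containing `x`, so each
point lies in its own block, and any two blocks are equal or disjoint. -/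
def IsPartitionMap {X : Type*} (P : X → Set X) : Prop :=
  (∀ x, x ∈ P x) ∧ ∀ x y, y ∈ P x → P y = P x

section PaddedAux

set_option linter.unusedSectionVars false

private lemma tele_sum (F : ℕ → ℝ) (hF : Monotone F) (K q : ℕ) (hq : 0 < q) :
    ∑ k ∈ Finset.range K, (F (k + q) - F k) ≤ q * (F (K + q) - F 0) := by
  have key : ∀ K : ℕ, ∑ k ∈ Finset.range K, (F (k + q) - F k)
      = (∑ j ∈ Finset.Ico K (K + q), F j) - ∑ j ∈ Finset.Ico 0 q, F j := by
    intro K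
    induction K with
    | zero => simp
    | succ K ih =>
      rw [Finset.sum_range_succ, ih]
      have h1 : ∑ j ∈ Finset.Ico K (K + q), F j
          = F K + ∑ j ∈ Finset.Ico (K + 1) (K + q), F j :=
        Finset.sum_eq_sum_Ico_succ_bot (by omega) F
      have h2 : ∑ j ∈ Finset.Ico (K + 1) (K + 1 + q), F j
          = (∑ j ∈ Finset.Ico (K + 1) (K + q), F j) + F (K + q) := by
        have : K + 1 + q = (K + q) + 1 := by omega
        rw [this, Finset.sum_Ico_succ_top (by omega)]
      rw [h2, h1]; ring
  rw [key]
  have hub : ∑ j ∈ Finset.Ico K (K + q), F j ≤ q * F (K + q) := by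
    calc ∑ j ∈ Finset.Ico K (K + q), F j ≤ (Finset.Ico K (K + q)).card • F (K + q) :=
          Finset.sum_le_card_nsmul _ _ _ (fun j hj => hF (le_of_lt (Finset.mem_Ico.mp hj).2))
      _ = q * F (K + q) := by rw [Nat.card_Ico]; simp [nsmul_eq_mul]
  have hlb : (q : ℝ) * F 0 ≤ ∑ j ∈ Finset.Ico 0 q, F j := by
    calc (q : ℝ) * F 0 = (Finset.Ico 0 q).card • F 0 := by rw [Nat.card_Ico]; simp [nsmul_eq_mul]
      _ ≤ ∑ j ∈ Finset.Ico 0 q, F j :=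
          Finset.card_nsmul_le_sum _ _ _ (fun j _ => hF (Nat.zero_le j))
  linarith [hub, hlb]

private lemma one_sub_div_le_log {a b : ℝ} (ha : 0 < a) (hab : a ≤ b) :
    1 - a / b ≤ Real.log b - Real.log a := by
  have hb : 0 < b := lt_of_lt_of_le ha hab
  have h := Real.log_le_sub_one_of_pos (div_pos ha hb)
  rw [Real.log_div (ne_of_gt ha) (ne_of_gt hb)] at h
  linarith

variable {X : Type*} [Fintype X] {n : ℕ}

private def amin (T : Finset X) (hT : T.Nonempty) (π : X ≃ Fin n) : X :=
  π.symm ((T.image π).min' (hT.image π))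

private lemma amin_mem (T : Finset X) (hT : T.Nonempty) (π : X ≃ Fin n) :
    amin T hT π ∈ T := by
  obtain ⟨y, hy, hyeq⟩ := Finset.mem_image.mp (Finset.min'_mem (T.image π) (hT.image π))
  have : amin T hT π = y := by
    unfold amin; rw [← hyeq, Equiv.symm_apply_apply]
  rwa [this]

private lemma amin_le (T : Finset X) (hT : T.Nonempty) (π : X ≃ Fin n)
    {y : X} (hy : y ∈ T) : π (amin T hT π) ≤ π y := by
  unfold amin
  rw [Equiv.apply_symm_apply]
  exact Finset.min'_le _ _ (Finset.mem_image_of_mem π hy)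

private lemma amin_swap (T : Finset X) (hT : T.Nonempty) (π : X ≃ Fin n)
    {y y' : X} (hy : y ∈ T) (hy' : y' ∈ T) (h : amin T hT π = y) :
    amin T hT (π.trans (Equiv.swap (π y) (π y'))) = y' := by
  set π' := π.trans (Equiv.swap (π y) (π y')) with hπ'
  have himg : T.image π' = T.image π := by
    have heq : T.image π' = (T.image π).image (Equiv.swap (π y) (π y')) := by
      rw [Finset.image_image]; rfl
    rw [heq]
    apply Finset.eq_of_subset_of_card_le
    · intro c hc
      obtain ⟨d, hd, rfl⟩ := Finset.mem_image.mp hc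
      rcases eq_or_ne d (π y) with h1 | h1
      · rw [h1, Equiv.swap_apply_left]; exact Finset.mem_image_of_mem π hy'
      · rcases eq_or_ne d (π y') with h2 | h2
        · rw [h2, Equiv.swap_apply_right]; exact Finset.mem_image_of_mem π hy
        · rw [Equiv.swap_apply_of_ne_of_ne h1 h2]; exact hd
    · rw [Finset.card_image_of_injective _ (Equiv.injective (Equiv.swap (π y) (π y'))),
        Finset.card_image_of_injective _ (Equiv.injective π)]
  have hmin : (T.image π').min' (hT.image π') = (T.image π).min' (hT.image π) := by
    simp only [himg]
  have hπy : π (amin T hT π) = (T.image π).min' (hT.image π) := by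
    unfold amin; rw [Equiv.apply_symm_apply]
  unfold amin
  rw [hmin, Equiv.symm_apply_eq]
  have : π' y' = π y := by
    simp [hπ', Equiv.trans_apply, Equiv.swap_apply_right]
  rw [this, ← hπy, h]

private lemma amin_card (T E : Finset X) (hT : T.Nonempty) (hE : E ⊆ T) :
    ((Finset.univ : Finset (X ≃ Fin n)).filter (fun π => amin T hT π ∈ E)).card * T.card
      = Fintype.card (X ≃ Fin n) * E.card := by
  have hfib : ∀ y ∈ T, ∀ y' ∈ T,
      ((Finset.univ : Finset (X ≃ Fin n)).filter (fun π => amin T hT π = y)).card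
        = ((Finset.univ : Finset (X ≃ Fin n)).filter (fun π => amin T hT π = y')).card := by
    intro y hy y' hy'
    refine Finset.card_bij' (fun π _ => π.trans (Equiv.swap (π y) (π y')))
      (fun σ _ => σ.trans (Equiv.swap (σ y') (σ y))) ?_ ?_ ?_ ?_
    · intro π hπ
      simp only [Finset.mem_filter, Finset.mem_univ, true_and] at hπ ⊢
      exact amin_swap T hT π hy hy' hπ
    · intro σ hσ
      simp only [Finset.mem_filter, Finset.mem_univ, true_and] at hσ ⊢
      exact amin_swap T hT σ hy' hy hσ
    · intro π hπ
      have h1 : (π.trans (Equiv.swap (π y) (π y'))) y' = π y := by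
        simp [Equiv.trans_apply, Equiv.swap_apply_right]
      have h2 : (π.trans (Equiv.swap (π y) (π y'))) y = π y' := by
        simp [Equiv.trans_apply, Equiv.swap_apply_left]
      show (π.trans (Equiv.swap (π y) (π y'))).trans
        (Equiv.swap ((π.trans (Equiv.swap (π y) (π y'))) y')
          ((π.trans (Equiv.swap (π y) (π y'))) y)) = π
      rw [h1, h2]
      ext z
      simp [Equiv.trans_apply, Equiv.swap_apply_self]
    · intro σ hσ
      have h1 : (σ.trans (Equiv.swap (σ y') (σ y))) y = σ y' := by
        simp [Equiv.trans_apply, Equiv.swap_apply_right]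
      have h2 : (σ.trans (Equiv.swap (σ y') (σ y))) y' = σ y := by
        simp [Equiv.trans_apply, Equiv.swap_apply_left]
      show (σ.trans (Equiv.swap (σ y') (σ y))).trans
        (Equiv.swap ((σ.trans (Equiv.swap (σ y') (σ y))) y)
          ((σ.trans (Equiv.swap (σ y') (σ y))) y')) = σ
      rw [h1, h2]
      ext z
      simp [Equiv.trans_apply, Equiv.swap_apply_self]
  obtain ⟨y₀, hy₀⟩ := id hT
  set f₀ := ((Finset.univ : Finset (X ≃ Fin n)).filter (fun π => amin T hT π = y₀)).card with hf₀
  have h1 : Fintype.card (X ≃ Fin n) = T.card * f₀ :=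
    calc Fintype.card (X ≃ Fin n) = (Finset.univ : Finset (X ≃ Fin n)).card :=
          Finset.card_univ.symm
      _ = ∑ y ∈ T, ((Finset.univ : Finset (X ≃ Fin n)).filter
            (fun π => amin T hT π = y)).card :=
          Finset.card_eq_sum_card_fiberwise (fun π _ => amin_mem T hT π)
      _ = ∑ _y ∈ T, f₀ := Finset.sum_congr rfl (fun y hy => hfib y hy y₀ hy₀)
      _ = T.card * f₀ := by rw [Finset.sum_const, smul_eq_mul]
  have h2 : ((Finset.univ : Finset (X ≃ Fin n)).filter (fun π => amin T hT π ∈ E)).card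
      = E.card * f₀ :=
    calc ((Finset.univ : Finset (X ≃ Fin n)).filter (fun π => amin T hT π ∈ E)).card
        = ∑ y ∈ E, (((Finset.univ : Finset (X ≃ Fin n)).filter
            (fun π => amin T hT π ∈ E)).filter (fun π => amin T hT π = y)).card :=
          Finset.card_eq_sum_card_fiberwise (fun π hπ => (Finset.mem_filter.mp hπ).2)
      _ = ∑ y ∈ E, f₀ := Finset.sum_congr rfl (fun y hy => by
          rw [Finset.filter_filter]
          have heq : Finset.filter
              (fun π : X ≃ Fin n => amin T hT π ∈ E ∧ amin T hT π = y) Finset.univ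
              = Finset.filter (fun π : X ≃ Fin n => amin T hT π = y) Finset.univ := by
            apply Finset.filter_congr
            intro π _
            constructor
            · exact fun h => h.2
            · exact fun h => ⟨h ▸ hy, h⟩
          rw [heq]
          exact hfib y (hE hy) y₀ hy₀)
      _ = E.card * f₀ := by rw [Finset.sum_const, smul_eq_mul]
  rw [h1, h2]; ring

variable [MetricSpace X]

/-- The CKR center of `x`: the point of the ball `B(x,R)` that is minimal in the order `π`. -/
private def ctr (π : X ≃ Fin n) (R : ℝ) (x : X) : X :=
  amin (insert x (Finset.univ.filter (fun y => dist x y ≤ R))) (Finset.insert_nonempty _ _) π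

private lemma ctr_dist (π : X ≃ Fin n) {R : ℝ} (hR : 0 ≤ R) (x : X) :
    dist x (ctr π R x) ≤ R := by
  have h : ctr π R x ∈ insert x (Finset.univ.filter (fun y => dist x y ≤ R)) :=
    amin_mem _ _ π
  rcases Finset.mem_insert.mp h with h1 | h1
  · rw [h1]; simpa [dist_self] using hR
  · exact (Finset.mem_filter.mp h1).2

private lemma ctr_min (π : X ≃ Fin n) (R : ℝ) (x : X) {y : X} (hy : dist x y ≤ R) :
    π (ctr π R x) ≤ π y :=
  amin_le _ _ _ (Finset.mem_insert_of_mem (Finset.mem_filter.mpr ⟨Finset.mem_univ _, hy⟩))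

private lemma ctr_eq (π : X ≃ Fin n) {R : ℝ} (hR : 0 ≤ R) {x w : X}
    (hw : dist x w ≤ R) (hmin : ∀ y, dist x y ≤ R → π w ≤ π y) : ctr π R x = w := by
  apply π.injective
  exact le_antisymm (ctr_min π R x hw) (hmin _ (ctr_dist π hR x))

/-- The partition into fibers of the CKR center map. -/
private def pmap (π : X ≃ Fin n) (R : ℝ) (x : X) : Set X :=
  {z | ctr π R z = ctr π R x}

private lemma pmap_isPartitionMap (π : X ≃ Fin n) (R : ℝ) :
    IsPartitionMap (pmap π R) := by
  constructor
  · intro x; exact rfl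
  · intro x y hy
    have hxy : ctr π R y = ctr π R x := hy
    ext z
    simp only [pmap, Set.mem_setOf_eq, hxy]

private lemma pmap_diam (π : X ≃ Fin n) {R : ℝ} (hR : 0 ≤ R) (x : X) :
    Metric.diam (pmap π R x) ≤ 2 * R := by
  apply Metric.diam_le_of_forall_dist_le (by linarith)
  intro z hz z' hz'
  have h1 : dist z (ctr π R x) ≤ R := by
    have := ctr_dist π hR z
    rwa [show ctr π R z = ctr π R x from hz] at this
  have h2 : dist z' (ctr π R x) ≤ R := by
    have := ctr_dist π hR z'
    rwa [show ctr π R z' = ctr π R x from hz'] at this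
  calc dist z z' ≤ dist z (ctr π R x) + dist z' (ctr π R x) := dist_triangle_right _ _ _
    _ ≤ 2 * R := by linarith

end PaddedAux

set_option maxHeartbeats 2000000 in
/-- **Existence of padded random partitions** (Lemma 2.8 / `lem:partition`, following
Calinescu–Karloff–Rabani).

For every finite metric space `(X,d)` and every `τ > 0` there is a random partition `𝒫` of
`X` (modelled as a finitely supported probability distribution `w : Fin m → ℝ` on partition
maps `P i : X → Set X`) such that:
(1) almost surely every block has diameter `< τ`; and
(2) for every `x ∈ X`, `Pr[B(x, ε(x)τ) ⊆ 𝒫(x)] ≥ 1/2`, where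
`ε(x) = (32 log(e |B(x,5τ/8)| / |B(x,τ/8)|))⁻¹` and `B(x,r)` is the closed ball. -/
theorem padded_random_partition_exists
    {X : Type*} [Fintype X] [MetricSpace X] (τ : ℝ) (hτ : 0 < τ) :
    ∃ (m : ℕ) (w : Fin m → ℝ) (P : Fin m → X → Set X),
      (∀ i, 0 ≤ w i) ∧ (∑ i, w i = 1) ∧
      (∀ i, w i ≠ 0 → IsPartitionMap (P i)) ∧
      (∀ i, w i ≠ 0 → ∀ x, Metric.diam (P i x) < τ) ∧
      (∀ x, (1 : ℝ) / 2 ≤ ∑ i,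
        (if Metric.closedBall x
              ((32 * Real.log (Real.exp 1 * ((Metric.closedBall x (5 * τ / 8)).ncard : ℝ) /
                ((Metric.closedBall x (τ / 8)).ncard : ℝ)))⁻¹ * τ) ⊆ P i x
          then w i else 0)) := by
  classical
  set n := Fintype.card X with hn
  set K : ℕ := 8 * n + 8 with hKdef
  have hKpos : 0 < K := by omega
  have hK8 : (8 : ℕ) ≤ K := by omega
  have hKR : (8 : ℝ) ≤ (K : ℝ) := by exact_mod_cast hK8
  have hKRpos : (0 : ℝ) < (K : ℝ) := by positivity
  clear_value n K
  set δ : ℝ := τ / (4 * K) with hδdef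
  have hδpos : 0 < δ := by rw [hδdef]; positivity
  have hKδ : (K : ℝ) * δ = τ / 4 := by
    rw [hδdef]; field_simp
  have hδ32 : δ ≤ τ / 32 := by
    rw [hδdef, div_le_div_iff₀ (by positivity) (by norm_num)]
    nlinarith
  clear_value δ
  set rad : Fin K → ℝ := fun k => τ / 4 + (k.val : ℝ) * δ with hraddef
  have hradlb : ∀ k : Fin K, τ / 4 ≤ rad k := by
    intro k
    have h1 : (0:ℝ) ≤ (k.val : ℝ) * δ := by positivity
    rw [hraddef]; linarith
  have hradub : ∀ k : Fin K, rad k ≤ τ / 2 - δ := by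
    intro k
    have hk : (k.val : ℝ) + 1 ≤ (K : ℝ) := by exact_mod_cast k.isLt
    have h2 : (k.val : ℝ) * δ ≤ ((K : ℝ) - 1) * δ := by
      apply mul_le_mul_of_nonneg_right _ (le_of_lt hδpos)
      linarith
    rw [hraddef]
    nlinarith [hKδ]
  have hradpos : ∀ k : Fin K, 0 < rad k := fun k => lt_of_lt_of_le (by positivity) (hradlb k)
  clear_value rad
  have hne : Nonempty (X ≃ Fin n) := by rw [hn]; exact ⟨Fintype.equivFin X⟩
  haveI hΩne : Nonempty ((X ≃ Fin n) × Fin K) := ⟨⟨hne.some, ⟨0, hKpos⟩⟩⟩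
  set N := Fintype.card ((X ≃ Fin n) × Fin K) with hNdef
  have hNpos : 0 < N := by rw [hNdef]; exact Fintype.card_pos
  have hNRpos : (0 : ℝ) < (N : ℝ) := by exact_mod_cast hNpos
  set P₀ : ℕ := Fintype.card (X ≃ Fin n) with hP₀def
  have hNPK : N = P₀ * K := by
    rw [hNdef, hP₀def, Fintype.card_prod, Fintype.card_fin]
  set e : ((X ≃ Fin n) × Fin K) ≃ Fin N := Fintype.equivFin ((X ≃ Fin n) × Fin K) with hedef
  clear hedef
  clear_value e N P₀
  refine ⟨N, fun _ => (N : ℝ)⁻¹, fun i => pmap (e.symm i).1 (rad (e.symm i).2), ?_, ?_, ?_, ?_, ?_⟩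
  · intro i; positivity
  · rw [Finset.sum_const, Finset.card_univ, Fintype.card_fin, nsmul_eq_mul,
      mul_inv_cancel₀ (ne_of_gt hNRpos)]
  · intro i _
    exact pmap_isPartitionMap _ _
  · intro i _ x
    have h1 := pmap_diam (e.symm i).1 (le_of_lt (hradpos (e.symm i).2)) x
    have h2 := hradub (e.symm i).2
    calc Metric.diam (pmap (e.symm i).1 (rad (e.symm i).2) x)
        ≤ 2 * rad (e.symm i).2 := h1
      _ ≤ 2 * (τ / 2 - δ) := by linarith
      _ < τ := by linarith
  · intro x
    haveI : Nonempty X := ⟨x⟩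
    have hn1 : 1 ≤ n := by rw [hn]; exact Fintype.card_pos
    have hnR : (1:ℝ) ≤ (n : ℝ) := by exact_mod_cast hn1
    -- ball counting function
    set g : ℝ → ℕ := fun s => (Finset.univ.filter (fun y => dist x y ≤ s)).card with hgdef
    have hgm : ∀ {s s' : ℝ}, s ≤ s' → g s ≤ g s' := by
      intro s s' hss
      rw [hgdef]
      apply Finset.card_le_card
      intro y hy
      exact Finset.mem_filter.mpr ⟨Finset.mem_univ _, le_trans (Finset.mem_filter.mp hy).2 hss⟩
    have hgx : ∀ {s : ℝ}, 0 ≤ s → 0 < g s := by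
      intro s hs
      rw [hgdef]
      apply Finset.card_pos.mpr
      exact ⟨x, Finset.mem_filter.mpr ⟨Finset.mem_univ _, by simpa [dist_self] using hs⟩⟩
    have hgn : ∀ s : ℝ, g s ≤ n := by
      intro s
      rw [hgdef, hn]
      simpa using Finset.card_le_univ (Finset.univ.filter (fun y => dist x y ≤ s))
    have hg : ∀ s : ℝ, (Metric.closedBall x s).ncard = g s := by
      intro s
      have h1 : Metric.closedBall x s = ↑(Finset.univ.filter (fun y => dist x y ≤ s)) := by
        ext z
        simp [Metric.mem_closedBall, dist_comm]
      rw [h1, Set.ncard_coe_finset, hgdef]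
    clear_value g
    rw [hg, hg]
    set a : ℕ := g (τ / 8) with hadef
    set b : ℕ := g (5 * τ / 8) with hbdef
    have ha1 : 1 ≤ a := by rw [hadef]; exact hgx (by positivity)
    have hab : a ≤ b := by rw [hadef, hbdef]; exact hgm (by linarith)
    have hbn : b ≤ n := by rw [hbdef]; exact hgn _
    have hga : ∀ {s : ℝ}, τ / 8 ≤ s → a ≤ g s := by
      intro s hs; rw [hadef]; exact hgm hs
    have hgb : ∀ {s : ℝ}, s ≤ 5 * τ / 8 → g s ≤ b := by
      intro s hs; rw [hbdef]; exact hgm hs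
    clear_value a b
    have haR : (1:ℝ) ≤ (a:ℝ) := by exact_mod_cast ha1
    have habR : (a:ℝ) ≤ (b:ℝ) := by exact_mod_cast hab
    have hbnR : (b:ℝ) ≤ (n:ℝ) := by exact_mod_cast hbn
    set Λ : ℝ := Real.log (b:ℝ) - Real.log (a:ℝ) with hΛdef
    have hΛ0 : 0 ≤ Λ := by
      have h1 := Real.log_le_log (by linarith : (0:ℝ) < (a:ℝ)) habR
      rw [hΛdef]; linarith
    have hloga : 0 ≤ Real.log (a:ℝ) := Real.log_nonneg haR
    have hΛub : Λ ≤ (n:ℝ) - 1 := by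
      have h1 : Real.log (b:ℝ) ≤ (b:ℝ) - 1 := Real.log_le_sub_one_of_pos (by linarith)
      rw [hΛdef]; linarith
    have hane : (a:ℝ) ≠ 0 := ne_of_gt (by linarith)
    have hbne : (b:ℝ) ≠ 0 := ne_of_gt (by linarith)
    have hlogeba : Real.log (Real.exp 1 * (b:ℝ) / (a:ℝ)) = 1 + Λ := by
      rw [Real.log_div (mul_ne_zero (ne_of_gt (Real.exp_pos 1)) hbne) hane,
        Real.log_mul (ne_of_gt (Real.exp_pos 1)) hbne, Real.log_exp, hΛdef]
      ring
    clear_value Λ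
    set t : ℝ := (32 * Real.log (Real.exp 1 * (b:ℝ) / (a:ℝ)))⁻¹ * τ with htdef
    have hteq : t = τ / (32 * (1 + Λ)) := by
      rw [htdef, hlogeba, inv_eq_one_div, div_mul_eq_mul_div, one_mul]
    have h1Λpos : (0:ℝ) < 1 + Λ := by linarith
    clear_value t
    have htpos : 0 < t := by rw [hteq]; positivity
    have ht32 : t ≤ τ / 32 := by
      rw [hteq, div_le_div_iff₀ (by positivity) (by norm_num)]
      nlinarith
    -- grid step count
    set p : ℕ := ⌈t / δ⌉₊ with hpdef
    have hppos : 0 < p := by rw [hpdef]; exact Nat.ceil_pos.mpr (by positivity)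
    have htpδ : t ≤ (p:ℝ) * δ := by
      have h1 : t / δ ≤ (p:ℝ) := by rw [hpdef]; exact Nat.le_ceil (t / δ)
      calc t = (t / δ) * δ := by field_simp
        _ ≤ (p:ℝ) * δ := mul_le_mul_of_nonneg_right h1 (le_of_lt hδpos)
    have hpδub : (p:ℝ) * δ ≤ t + δ := by
      have h1 : (p:ℝ) < t / δ + 1 := by rw [hpdef]; exact Nat.ceil_lt_add_one (by positivity)
      have h2 : (p:ℝ) * δ ≤ (t / δ + 1) * δ :=
        mul_le_mul_of_nonneg_right (le_of_lt h1) (le_of_lt hδpos)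
      calc (p:ℝ) * δ ≤ (t / δ + 1) * δ := h2
        _ = t + δ := by field_simp
    have hpup : (p:ℝ) ≤ t / δ + 1 := by
      rw [hpdef]; exact le_of_lt (Nat.ceil_lt_add_one (by positivity))
    clear_value p
    have hpδ16 : (p:ℝ) * δ ≤ τ / 16 := by linarith
    -- the "touching" sets and the core balls
    set T : Fin K → Finset X := fun k =>
      Finset.univ.filter (fun y => ∃ z, dist x z ≤ t ∧ dist z y ≤ rad k) with hTdef
    have hTmem : ∀ (k : Fin K) (y : X),
        y ∈ T k ↔ ∃ z, dist x z ≤ t ∧ dist z y ≤ rad k := by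
      intro k y; rw [hTdef]; simp
    set Bcl : Fin K → Finset X := fun k =>
      Finset.univ.filter (fun y => dist x y ≤ rad k - t) with hBcldef
    have hBmem : ∀ (k : Fin K) (y : X), y ∈ Bcl k ↔ dist x y ≤ rad k - t := by
      intro k y; rw [hBcldef]; simp
    have hBclcard : ∀ k : Fin K, (Bcl k).card = g (rad k - t) := by
      intro k; rw [hBcldef, hgdef]
    clear_value T Bcl
    have hTne : ∀ k : Fin K, (T k).Nonempty := by
      intro k
      exact ⟨x, (hTmem k x).mpr ⟨x, by simp [dist_self, le_of_lt htpos, le_of_lt (hradpos k)]⟩⟩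
    have hBclT : ∀ k : Fin K, Bcl k ⊆ T k := by
      intro k y hy
      have hy' := (hBmem k y).mp hy
      exact (hTmem k y).mpr ⟨x, by simp [dist_self, le_of_lt htpos], by linarith⟩
    have hTsub : ∀ k : Fin K, (T k).card ≤ g (rad k + t) := by
      intro k
      rw [hgdef]
      apply Finset.card_le_card
      intro y hy
      obtain ⟨z, hz1, hz2⟩ := (hTmem k y).mp hy
      exact Finset.mem_filter.mpr ⟨Finset.mem_univ _,
        le_trans (dist_triangle x z y) (by linarith)⟩
    -- Step A: if the ball is cut then the π-minimum of T k lies in T k \ Bcl k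
    have stepA : ∀ (π : X ≃ Fin n) (k : Fin K),
        ¬ (Metric.closedBall x t ⊆ pmap π (rad k) x) →
        amin (T k) (hTne k) π ∈ T k \ Bcl k := by
      intro π k hbad
      set w := amin (T k) (hTne k) π with hwdef
      have hradnn : (0:ℝ) ≤ rad k := le_of_lt (hradpos k)
      have key : ∀ z, dist x z ≤ t → dist z w ≤ rad k → ctr π (rad k) z = w := by
        intro z hz hzw
        apply ctr_eq π hradnn hzw
        intro y hy
        apply amin_le
        exact (hTmem k y).mpr ⟨z, hz, hy⟩
      rw [Finset.mem_sdiff]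
      refine ⟨amin_mem _ _ _, ?_⟩
      intro hwB
      have hxw : dist x w ≤ rad k - t := (hBmem k w).mp hwB
      obtain ⟨z₀, hz₀m, hz₀b⟩ := Set.not_subset.mp hbad
      have hz₀ : dist x z₀ ≤ t := by
        rw [dist_comm]; exact Metric.mem_closedBall.mp hz₀m
      have hc₀ : ctr π (rad k) z₀ = w := by
        apply key z₀ hz₀
        calc dist z₀ w ≤ dist z₀ x + dist x w := dist_triangle _ _ _
          _ ≤ t + (rad k - t) := add_le_add (by rw [dist_comm]; exact hz₀) hxw
          _ = rad k := by ring
      have hcx : ctr π (rad k) x = w := by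
        apply key x (by simp [dist_self, le_of_lt htpos])
        linarith
      apply hz₀b
      show ctr π (rad k) z₀ = ctr π (rad k) x
      rw [hc₀, hcx]
    -- per-k probability bound
    have hperk : ∀ k : Fin K,
        (((Finset.univ : Finset (X ≃ Fin n)).filter
            (fun π => amin (T k) (hTne k) π ∈ T k \ Bcl k)).card : ℝ)
          ≤ (P₀ : ℝ) * (Real.log (g (rad k + t) : ℝ) - Real.log (g (rad k - t) : ℝ)) := by
      intro k
      have hrt : (0:ℝ) ≤ rad k - t := by
        have h1 := hradlb k
        linarith
      have hgm1 : 0 < g (rad k - t) := hgx hrt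
      have hgm1R : (0:ℝ) < (g (rad k - t) : ℝ) := by exact_mod_cast hgm1
      have hTposn : 0 < (T k).card := Finset.card_pos.mpr (hTne k)
      have hTposR : (0:ℝ) < ((T k).card : ℝ) := by exact_mod_cast hTposn
      have hgp : (0:ℝ) < (g (rad k + t) : ℝ) := by
        have h1 : 0 < g (rad k + t) := hgx (by linarith [hradpos k])
        exact_mod_cast h1
      have hTg : ((T k).card : ℝ) ≤ (g (rad k + t) : ℝ) := by exact_mod_cast hTsub k
      have hBT : (Bcl k).card ≤ (T k).card := Finset.card_le_card (hBclT k)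
      have hcard := amin_card (n := n) (T k) (T k \ Bcl k) (hTne k) Finset.sdiff_subset
      rw [← hP₀def] at hcard
      have hcardR : (((Finset.univ : Finset (X ≃ Fin n)).filter
          (fun π => amin (T k) (hTne k) π ∈ T k \ Bcl k)).card : ℝ) * ((T k).card : ℝ)
            = (P₀ : ℝ) * ((T k \ Bcl k).card : ℝ) := by
        exact_mod_cast hcard
      have hEcard : ((T k \ Bcl k).card : ℝ) = ((T k).card : ℝ) - ((Bcl k).card : ℝ) := by
        rw [Finset.card_sdiff_of_subset (hBclT k)]
        exact Nat.cast_sub hBT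
      have hT0 : ((T k).card : ℝ) ≠ 0 := ne_of_gt hTposR
      have hmain : (((Finset.univ : Finset (X ≃ Fin n)).filter
          (fun π => amin (T k) (hTne k) π ∈ T k \ Bcl k)).card : ℝ)
            = (P₀ : ℝ) * (1 - ((Bcl k).card : ℝ) / ((T k).card : ℝ)) := by
        rw [hEcard] at hcardR
        have h4 : (((Finset.univ : Finset (X ≃ Fin n)).filter
            (fun π => amin (T k) (hTne k) π ∈ T k \ Bcl k)).card : ℝ)
              = (P₀ : ℝ) * (((T k).card : ℝ) - ((Bcl k).card : ℝ)) / ((T k).card : ℝ) := by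
          rw [eq_div_iff hT0]
          exact hcardR
        rw [h4, mul_div_assoc, sub_div, div_self hT0]
      rw [hmain, hBclcard k]
      have hfrac : (g (rad k - t) : ℝ) / (g (rad k + t) : ℝ)
          ≤ (g (rad k - t) : ℝ) / ((T k).card : ℝ) :=
        div_le_div_of_nonneg_left (le_of_lt hgm1R) hTposR hTg
      have hmono2 : (g (rad k - t) : ℝ) ≤ (g (rad k + t) : ℝ) := by
        exact_mod_cast hgm (by linarith : rad k - t ≤ rad k + t)
      have hlog := one_sub_div_le_log hgm1R hmono2
      have hP₀nn : (0:ℝ) ≤ (P₀:ℝ) := by positivity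
      apply mul_le_mul_of_nonneg_left _ hP₀nn
      calc 1 - (g (rad k - t) : ℝ) / ((T k).card : ℝ)
          ≤ 1 - (g (rad k - t) : ℝ) / (g (rad k + t) : ℝ) := by linarith
        _ ≤ Real.log (g (rad k + t) : ℝ) - Real.log (g (rad k - t) : ℝ) := hlog
    -- telescoping bound
    set F : ℕ → ℝ := fun j => Real.log (g (τ / 4 - (p:ℝ) * δ + (j:ℝ) * δ) : ℝ) with hFdef
    have hargnn : ∀ j : ℕ, 0 ≤ τ / 4 - (p:ℝ) * δ + (j:ℝ) * δ := by
      intro j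
      have h1 : (0:ℝ) ≤ (j:ℝ) * δ := by positivity
      linarith
    have hFval : ∀ j : ℕ, F j = Real.log (g (τ / 4 - (p:ℝ) * δ + (j:ℝ) * δ) : ℝ) := by
      intro j; rw [hFdef]
    clear_value F
    have hFmono : Monotone F := by
      intro j j' hjj
      rw [hFval j, hFval j']
      apply Real.log_le_log
      · exact_mod_cast hgx (hargnn j)
      · have h1 : (j:ℝ) * δ ≤ (j':ℝ) * δ :=
          mul_le_mul_of_nonneg_right (by exact_mod_cast hjj) (le_of_lt hδpos)
        exact_mod_cast hgm (by linarith)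
    have hperk2 : ∀ k : Fin K,
        Real.log (g (rad k + t) : ℝ) - Real.log (g (rad k - t) : ℝ)
          ≤ F (k.val + 2 * p) - F k.val := by
      intro k
      have hk4 : τ / 4 ≤ rad k := hradlb k
      have harg1 : rad k + t ≤ τ / 4 - (p:ℝ) * δ + ((k.val + 2 * p : ℕ):ℝ) * δ := by
        push_cast
        have hkk : rad k = τ / 4 + (k.val : ℝ) * δ := by rw [hraddef]
        rw [hkk]
        ring_nf
        nlinarith [htpδ]
      have harg2 : τ / 4 - (p:ℝ) * δ + ((k.val : ℕ):ℝ) * δ ≤ rad k - t := by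
        push_cast
        have hkk : rad k = τ / 4 + (k.val : ℝ) * δ := by rw [hraddef]
        rw [hkk]
        nlinarith [htpδ]
      have h1 : Real.log (g (rad k + t) : ℝ) ≤ F (k.val + 2 * p) := by
        rw [hFval]
        apply Real.log_le_log
        · exact_mod_cast hgx (by linarith : (0:ℝ) ≤ rad k + t)
        · exact_mod_cast hgm harg1
      have h2 : F k.val ≤ Real.log (g (rad k - t) : ℝ) := by
        rw [hFval]
        apply Real.log_le_log
        · exact_mod_cast hgx (hargnn k.val)
        · exact_mod_cast hgm harg2
      linarith
    have htele : ∑ k ∈ Finset.range K, (F (k + 2 * p) - F k)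
        ≤ ((2 * p : ℕ) : ℝ) * (F (K + 2 * p) - F 0) :=
      tele_sum F hFmono K (2 * p) (by omega)
    have hFtop : F (K + 2 * p) ≤ Real.log (b : ℝ) := by
      rw [hFval]
      apply Real.log_le_log
      · exact_mod_cast hgx (hargnn (K + 2 * p))
      · have harg : τ / 4 - (p:ℝ) * δ + ((K + 2 * p : ℕ):ℝ) * δ ≤ 5 * τ / 8 := by
          push_cast
          nlinarith [hKδ, hpδ16]
        exact_mod_cast hgb harg
    have hFbot : Real.log (a : ℝ) ≤ F 0 := by
      rw [hFval]
      apply Real.log_le_log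
      · exact_mod_cast (by positivity : (0:ℝ) < (a:ℝ))
      · have harg : τ / 8 ≤ τ / 4 - (p:ℝ) * δ + ((0:ℕ):ℝ) * δ := by
          push_cast
          nlinarith [hpδ16]
        exact_mod_cast hga harg
    have hsumlog : ∑ k : Fin K,
        (Real.log (g (rad k + t) : ℝ) - Real.log (g (rad k - t) : ℝ))
          ≤ 2 * (p:ℝ) * Λ := by
      calc ∑ k : Fin K, (Real.log (g (rad k + t) : ℝ) - Real.log (g (rad k - t) : ℝ))
          ≤ ∑ k : Fin K, (F (k.val + 2 * p) - F k.val) :=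
            Finset.sum_le_sum (fun k _ => hperk2 k)
        _ = ∑ k ∈ Finset.range K, (F (k + 2 * p) - F k) :=
            Fin.sum_univ_eq_sum_range (fun j => F (j + 2 * p) - F j) K
        _ ≤ ((2 * p : ℕ) : ℝ) * (F (K + 2 * p) - F 0) := htele
        _ ≤ 2 * (p:ℝ) * Λ := by
            push_cast
            have hd : F (K + 2 * p) - F 0 ≤ Λ := by rw [hΛdef]; linarith
            have hd0 : 0 ≤ F (K + 2 * p) - F 0 :=
              sub_nonneg.mpr (hFmono (Nat.zero_le (K + 2 * p)))
            have h2p : (0:ℝ) ≤ 2 * (p:ℝ) := by positivity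
            nlinarith
    -- final arithmetic: 2pΛ ≤ K/2
    have harith : 2 * (p:ℝ) * Λ ≤ (K:ℝ) / 2 := by
      have htδ : t / δ = (K:ℝ) / (8 * (1 + Λ)) := by
        rw [hteq, hδdef]
        field_simp
        ring
      have hpub : (p:ℝ) ≤ (K:ℝ) / (8 * (1 + Λ)) + 1 := by
        rw [← htδ]; exact hpup
      have hKc : (K:ℝ) = 8 * (n:ℝ) + 8 := by
        rw [hKdef]; push_cast; ring
      have hstep : 2 * ((K:ℝ) / (8 * (1 + Λ)) + 1) * Λ ≤ (K:ℝ) / 2 := by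
        have hexp : 2 * ((K:ℝ) / (8 * (1 + Λ)) + 1) * Λ
            = ((K:ℝ) * Λ + 8 * Λ * (1 + Λ)) / (4 * (1 + Λ)) := by
          field_simp
          ring
        rw [hexp, div_le_iff₀ (by positivity : (0:ℝ) < 4 * (1 + Λ))]
        nlinarith [mul_le_mul_of_nonneg_left hΛub hΛ0, hΛ0, hΛub, hnR, hKc]
      calc 2 * (p:ℝ) * Λ ≤ 2 * ((K:ℝ) / (8 * (1 + Λ)) + 1) * Λ := by
            apply mul_le_mul_of_nonneg_right _ hΛ0
            linarith
        _ ≤ (K:ℝ) / 2 := hstep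
    -- count bad outcomes
    have hbadsum : ∑ ω : (X ≃ Fin n) × Fin K,
        (if amin (T ω.2) (hTne ω.2) ω.1 ∈ T ω.2 \ Bcl ω.2 then (1:ℝ) else 0)
          ≤ (N:ℝ) / 2 := by
      rw [Fintype.sum_prod_type, Finset.sum_comm]
      have hinner : ∀ k : Fin K, ∑ π : X ≃ Fin n,
          (if amin (T k) (hTne k) π ∈ T k \ Bcl k then (1:ℝ) else 0)
            = (((Finset.univ : Finset (X ≃ Fin n)).filter
                (fun π => amin (T k) (hTne k) π ∈ T k \ Bcl k)).card : ℝ) := by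
        intro k
        rw [Finset.sum_boole]
      calc ∑ k : Fin K, ∑ π : X ≃ Fin n,
            (if amin (T k) (hTne k) π ∈ T k \ Bcl k then (1:ℝ) else 0)
          = ∑ k : Fin K, (((Finset.univ : Finset (X ≃ Fin n)).filter
              (fun π => amin (T k) (hTne k) π ∈ T k \ Bcl k)).card : ℝ) :=
            Finset.sum_congr rfl (fun k _ => hinner k)
        _ ≤ ∑ k : Fin K, (P₀ : ℝ) *
              (Real.log (g (rad k + t) : ℝ) - Real.log (g (rad k - t) : ℝ)) :=
            Finset.sum_le_sum (fun k _ => hperk k)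
        _ = (P₀ : ℝ) * ∑ k : Fin K,
              (Real.log (g (rad k + t) : ℝ) - Real.log (g (rad k - t) : ℝ)) := by
            rw [Finset.mul_sum]
        _ ≤ (P₀ : ℝ) * (2 * (p:ℝ) * Λ) :=
            mul_le_mul_of_nonneg_left hsumlog (by positivity)
        _ ≤ (P₀ : ℝ) * ((K:ℝ) / 2) :=
            mul_le_mul_of_nonneg_left harith (by positivity)
        _ = (N:ℝ) / 2 := by
            rw [hNPK]; push_cast; ring
    -- the good-event sum
    have hgoodsum : (N:ℝ) / 2 ≤ ∑ ω : (X ≃ Fin n) × Fin K,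
        (if Metric.closedBall x t ⊆ pmap ω.1 (rad ω.2) x then (1:ℝ) else 0) := by
      have hpt : ∀ ω : (X ≃ Fin n) × Fin K,
          (1:ℝ) - (if amin (T ω.2) (hTne ω.2) ω.1 ∈ T ω.2 \ Bcl ω.2 then (1:ℝ) else 0)
            ≤ (if Metric.closedBall x t ⊆ pmap ω.1 (rad ω.2) x then (1:ℝ) else 0) := by
        intro ω
        by_cases hgood : Metric.closedBall x t ⊆ pmap ω.1 (rad ω.2) x
        · rw [if_pos hgood]
          split <;> norm_num
        · rw [if_neg hgood, if_pos (stepA ω.1 ω.2 hgood)]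
          norm_num
      have h1 : ∑ ω : (X ≃ Fin n) × Fin K,
          ((1:ℝ) - (if amin (T ω.2) (hTne ω.2) ω.1 ∈ T ω.2 \ Bcl ω.2 then (1:ℝ) else 0))
            ≤ ∑ ω : (X ≃ Fin n) × Fin K,
              (if Metric.closedBall x t ⊆ pmap ω.1 (rad ω.2) x then (1:ℝ) else 0) :=
        Finset.sum_le_sum (fun ω _ => hpt ω)
      have h2 : ∑ ω : (X ≃ Fin n) × Fin K,
          ((1:ℝ) - (if amin (T ω.2) (hTne ω.2) ω.1 ∈ T ω.2 \ Bcl ω.2 then (1:ℝ) else 0))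
            = (N:ℝ) - ∑ ω : (X ≃ Fin n) × Fin K,
              (if amin (T ω.2) (hTne ω.2) ω.1 ∈ T ω.2 \ Bcl ω.2 then (1:ℝ) else 0) := by
        rw [Finset.sum_sub_distrib, Finset.sum_const, Finset.card_univ, nsmul_eq_mul, mul_one,
          hNdef]
      linarith [hbadsum, h1, h2]
    -- reindex and conclude
    have hre : ∑ i : Fin N,
        (if Metric.closedBall x t ⊆ pmap (e.symm i).1 (rad (e.symm i).2) x
          then (N:ℝ)⁻¹ else 0)
          = ∑ ω : (X ≃ Fin n) × Fin K,
            (if Metric.closedBall x t ⊆ pmap ω.1 (rad ω.2) x then (N:ℝ)⁻¹ else 0) :=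
      Equiv.sum_comp e.symm
        (fun ω => if Metric.closedBall x t ⊆ pmap ω.1 (rad ω.2) x then (N:ℝ)⁻¹ else 0)
    rw [hre]
    have hsplit : ∑ ω : (X ≃ Fin n) × Fin K,
        (if Metric.closedBall x t ⊆ pmap ω.1 (rad ω.2) x then (N:ℝ)⁻¹ else 0)
          = (N:ℝ)⁻¹ * ∑ ω : (X ≃ Fin n) × Fin K,
            (if Metric.closedBall x t ⊆ pmap ω.1 (rad ω.2) x then (1:ℝ) else 0) := by
      rw [Finset.mul_sum]
      apply Finset.sum_congr rfl
      intro ω _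
      split <;> ring
    rw [hsplit]
    calc (1:ℝ) / 2 = (N:ℝ)⁻¹ * ((N:ℝ) / 2) := by field_simp
      _ ≤ (N:ℝ)⁻¹ * ∑ ω : (X ≃ Fin n) × Fin K,
          (if Metric.closedBall x t ⊆ pmap ω.1 (rad ω.2) x then (1:ℝ) else 0) :=
        mul_le_mul_of_nonneg_left hgoodsum (by positivity)

end
end

section
/- Let (H, ρ_H) and (G, ρ_G) be finite connected rooted simple graphs with at least one edge each, and let 𝔾 = 𝔾(G;H) be the rooted graph obtained from them by the tree-of-H's-under-G construction, with root ρ_𝔾 = ρ_G. Then: (1) deg_𝔾(ρ_𝔾) = deg_G(ρ_G); (2) the maximum degree satisfies Δ_𝔾 ≤ max{ Δ_H, Δ_G + 1, deg_H(ρ_H) + 1 }; and (3) diam(𝔾) ≤ diam(G) + 6·diam(H). -/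
open scoped Classical

noncomputable section

/-- The vertex set of the "tree of `H`'s under `G`" construction `𝔾(G;H)`:
the vertices of `G`, together with, for every non-root vertex `u` of `G`, a disjoint copy of
the vertices of `H` and the `L` internal vertices of the tail joining `u` to the root of its
copy of `H` (so the tail, a path from `u` to the copy of `ρ_H`, has length `L + 1`). -/
abbrev TreeVert (VG VH : Type*) (ρG : VG) (L : ℕ) : Type _ :=
  VG ⊕ (({u : VG // u ≠ ρG} × VH) ⊕ ({u : VG // u ≠ ρG} × Fin L))

/-- One direction of each edge of `𝔾(G;H)`:  the edges of `G`; for each non-root `u ∈ V(G)`,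
the edges of the copy `H^{(u)}` of `H`; and the edges of the tail
`u — p_{u,0} — p_{u,1} — ⋯ — p_{u,L-1} — ρ_H^{(u)}`. -/
def treeRel {VG VH : Type*} (G : SimpleGraph VG) (H : SimpleGraph VH) (ρG : VG) (ρH : VH)
    (L : ℕ) : TreeVert VG VH ρG L → TreeVert VG VH ρG L → Prop
  | Sum.inl u, Sum.inl v => G.Adj u v
  | Sum.inl u, Sum.inr (Sum.inr (w, i)) => (w : VG) = u ∧ (i : ℕ) = 0
  | Sum.inr (Sum.inr (w, i)), Sum.inr (Sum.inr (w', j)) => w = w' ∧ (j : ℕ) = (i : ℕ) + 1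
  | Sum.inr (Sum.inr (w, i)), Sum.inr (Sum.inl (w', h)) => w = w' ∧ (i : ℕ) = L - 1 ∧ h = ρH
  | Sum.inr (Sum.inl (w, h)), Sum.inr (Sum.inl (w', h')) => w = w' ∧ H.Adj h h'
  | _, _ => False

namespace TreeAux
open SimpleGraph Sum
variable {VG VH : Type} (G : SimpleGraph VG) (H : SimpleGraph VH) (ρG : VG) (ρH : VH) (L : ℕ)
def TG : SimpleGraph (TreeVert VG VH ρG L) := SimpleGraph.fromRel (treeRel G H ρG ρH L)
variable {G H ρG ρH L}

lemma adj_inl_inl {u v : VG} : (TG G H ρG ρH L).Adj (inl u) (inl v) ↔ G.Adj u v := by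
  rw [TG, SimpleGraph.fromRel_adj]
  constructor
  · rintro ⟨hne, h | h⟩
    · exact h
    · exact h.symm
  · intro h
    exact ⟨by simp [h.ne], Or.inl h⟩

lemma adj_inl_copy {u : VG} {w : {u : VG // u ≠ ρG}} {h : VH} :
    ¬ (TG G H ρG ρH L).Adj (inl u) (inr (inl (w, h))) := by
  rw [TG, SimpleGraph.fromRel_adj]
  rintro ⟨hne, hr | hr⟩ <;> exact hr

lemma adj_inl_tail {u : VG} {w : {u : VG // u ≠ ρG}} {i : Fin L} :
    (TG G H ρG ρH L).Adj (inl u) (inr (inr (w, i))) ↔ (w : VG) = u ∧ (i : ℕ) = 0 := by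
  rw [TG, SimpleGraph.fromRel_adj]
  constructor
  · rintro ⟨hne, hr | hr⟩
    · exact hr
    · exact hr.elim
  · intro hr
    exact ⟨by simp, Or.inl hr⟩

lemma adj_copy_copy {w w' : {u : VG // u ≠ ρG}} {h h' : VH} :
    (TG G H ρG ρH L).Adj (inr (inl (w, h))) (inr (inl (w', h'))) ↔ w = w' ∧ H.Adj h h' := by
  rw [TG, SimpleGraph.fromRel_adj]
  constructor
  · rintro ⟨hne, hr | hr⟩
    · exact hr
    · exact ⟨hr.1.symm, hr.2.symm⟩
  · rintro ⟨rfl, hr⟩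
    exact ⟨by simp [hr.ne], Or.inl ⟨rfl, hr⟩⟩

lemma adj_copy_tail {w w' : {u : VG // u ≠ ρG}} {h : VH} {i : Fin L} :
    (TG G H ρG ρH L).Adj (inr (inl (w, h))) (inr (inr (w', i))) ↔
      w = w' ∧ (i : ℕ) = L - 1 ∧ h = ρH := by
  rw [TG, SimpleGraph.fromRel_adj]
  constructor
  · rintro ⟨hne, hr | hr⟩
    · exact hr.elim
    · exact ⟨hr.1.symm, hr.2⟩
  · rintro ⟨rfl, hr⟩
    exact ⟨by simp, Or.inr ⟨rfl, hr⟩⟩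

lemma adj_tail_tail {w w' : {u : VG // u ≠ ρG}} {i j : Fin L} :
    (TG G H ρG ρH L).Adj (inr (inr (w, i))) (inr (inr (w', j))) ↔
      w = w' ∧ ((j : ℕ) = (i : ℕ) + 1 ∨ (i : ℕ) = (j : ℕ) + 1) := by
  rw [TG, SimpleGraph.fromRel_adj]
  constructor
  · rintro ⟨hne, hr | hr⟩
    · exact ⟨hr.1, Or.inl hr.2⟩
    · exact ⟨hr.1.symm, Or.inr hr.2⟩
  · rintro ⟨rfl, hr | hr⟩
    · refine ⟨?_, Or.inl ⟨rfl, hr⟩⟩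
      simp only [ne_eq, inr.injEq, Prod.mk.injEq, true_and]
      intro hij
      rw [hij] at hr
      omega
    · refine ⟨?_, Or.inr ⟨rfl, hr⟩⟩
      simp only [ne_eq, inr.injEq, Prod.mk.injEq, true_and]
      intro hij
      rw [hij] at hr
      omega

section Degrees
variable [Fintype VG] [Fintype VH]

lemma nbhd_root :
    (TG G H ρG ρH L).neighborFinset (inl ρG) =
      (G.neighborFinset ρG).map ⟨inl, inl_injective⟩ := by
  ext x
  rcases x with u | (⟨w, h⟩ | ⟨w, i⟩)
  · simp [adj_inl_inl]
  · simp [adj_inl_copy]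
  · simp only [mem_neighborFinset, Finset.mem_map]
    constructor
    · intro hx
      rw [adj_inl_tail] at hx
      exact absurd hx.1 w.2
    · rintro ⟨v, -, hv⟩
      cases hv

lemma deg_root : (TG G H ρG ρH L).degree (inl ρG) = G.degree ρG := by
  rw [SimpleGraph.degree, nbhd_root, Finset.card_map, SimpleGraph.degree]

lemma deg_inl (hL : 0 < L) {u : VG} (hu : u ≠ ρG) :
    (TG G H ρG ρH L).degree (inl u) ≤ G.degree u + 1 := by
  have hsub : (TG G H ρG ρH L).neighborFinset (inl u) ⊆
      insert (inr (inr (⟨u, hu⟩, ⟨0, hL⟩)))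
        ((G.neighborFinset u).map ⟨inl, inl_injective⟩) := by
    intro x hx
    rw [mem_neighborFinset] at hx
    rcases x with v | (⟨w, h⟩ | ⟨w, i⟩)
    · rw [adj_inl_inl] at hx
      exact Finset.mem_insert_of_mem (by simp [hx])
    · exact absurd hx (adj_inl_copy)
    · rw [adj_inl_tail] at hx
      obtain ⟨hw, hi⟩ := hx
      have : (⟨w, i⟩ : {u : VG // u ≠ ρG} × Fin L) = (⟨⟨u, hu⟩, ⟨0, hL⟩⟩) := by
        refine Prod.ext (Subtype.ext hw) (Fin.ext hi)
      rw [this]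
      exact Finset.mem_insert_self _ _
  calc (TG G H ρG ρH L).degree (inl u) ≤ _ := Finset.card_le_card hsub
    _ ≤ _ + 1 := Finset.card_insert_le _ _
    _ = G.degree u + 1 := by rw [Finset.card_map]; rfl

lemma copyEmb (w : {u : VG // u ≠ ρG}) :
    Function.Injective (fun h : VH => (inr (inl (w, h)) : TreeVert VG VH ρG L)) := by
  intro a b hab
  simpa using hab

lemma deg_copy {w : {u : VG // u ≠ ρG}} {h : VH} (hh : h ≠ ρH) :
    (TG G H ρG ρH L).degree (inr (inl (w, h))) ≤ H.degree h := by
  have hsub : (TG G H ρG ρH L).neighborFinset (inr (inl (w, h))) ⊆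
      (H.neighborFinset h).map ⟨_, copyEmb w⟩ := by
    intro x hx
    rw [mem_neighborFinset] at hx
    rcases x with v | (⟨w', h'⟩ | ⟨w', i⟩)
    · exact absurd hx.symm (adj_inl_copy)
    · rw [adj_copy_copy] at hx
      obtain ⟨rfl, hadj⟩ := hx
      simp only [Finset.mem_map, mem_neighborFinset, Function.Embedding.coeFn_mk]
      exact ⟨h', hadj, rfl⟩
    · rw [adj_copy_tail] at hx
      exact absurd hx.2.2 hh
  calc (TG G H ρG ρH L).degree (inr (inl (w, h))) ≤ _ := Finset.card_le_card hsub
    _ = H.degree h := by rw [Finset.card_map]; rfl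

lemma deg_copy_root (hL : 0 < L) {w : {u : VG // u ≠ ρG}} :
    (TG G H ρG ρH L).degree (inr (inl (w, ρH))) ≤ H.degree ρH + 1 := by
  have hsub : (TG G H ρG ρH L).neighborFinset (inr (inl (w, ρH))) ⊆
      insert (inr (inr (w, ⟨L - 1, by omega⟩)))
        ((H.neighborFinset ρH).map ⟨_, copyEmb w⟩) := by
    intro x hx
    rw [mem_neighborFinset] at hx
    rcases x with v | (⟨w', h'⟩ | ⟨w', i⟩)
    · exact absurd hx.symm (adj_inl_copy)
    · rw [adj_copy_copy] at hx
      obtain ⟨rfl, hadj⟩ := hx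
      exact Finset.mem_insert_of_mem (by
        simp only [Finset.mem_map, mem_neighborFinset, Function.Embedding.coeFn_mk]
        exact ⟨h', hadj, rfl⟩)
    · rw [adj_copy_tail] at hx
      obtain ⟨rfl, hi, -⟩ := hx
      have : i = (⟨L - 1, by omega⟩ : Fin L) := Fin.ext hi
      rw [this]
      exact Finset.mem_insert_self _ _
  calc (TG G H ρG ρH L).degree (inr (inl (w, ρH))) ≤ _ := Finset.card_le_card hsub
    _ ≤ _ + 1 := Finset.card_insert_le _ _
    _ = H.degree ρH + 1 := by rw [Finset.card_map]; rfl

lemma deg_tail {w : {u : VG // u ≠ ρG}} {i : Fin L} :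
    (TG G H ρG ρH L).degree (inr (inr (w, i))) ≤ 2 := by
  classical
  set a : TreeVert VG VH ρG L :=
    if (i : ℕ) = 0 then inl (w : VG) else inr (inr (w, ⟨(i : ℕ) - 1, by omega⟩)) with ha
  set b : TreeVert VG VH ρG L :=
    if _h : (i : ℕ) = L - 1 then inr (inl (w, ρH))
      else inr (inr (w, ⟨(i : ℕ) + 1, by omega⟩)) with hb
  have hsub : (TG G H ρG ρH L).neighborFinset (inr (inr (w, i))) ⊆ {a, b} := by
    intro x hx
    rw [mem_neighborFinset] at hx
    rcases x with v | (⟨w', h'⟩ | ⟨w', j⟩)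
    · obtain ⟨hw, hi⟩ := adj_inl_tail.mp hx.symm
      have hav : a = inl (w : VG) := by rw [ha, if_pos hi]
      rw [← hw, ← hav]
      simp
    · obtain ⟨hw, hi, hh⟩ := adj_copy_tail.mp hx.symm
      have hbv : b = inr (inl (w, ρH)) := by rw [hb, dif_pos hi]
      rw [hh, hw, ← hbv]
      simp
    · obtain ⟨hw, hj | hj⟩ := adj_tail_tail.mp hx
      · subst hw
        have hi : (i : ℕ) ≠ L - 1 := by have := j.isLt; omega
        have hbv : b = inr (inr (w, ⟨(i : ℕ) + 1, by have := j.isLt; omega⟩)) := by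
          rw [hb, dif_neg hi]
        have hjv : j = (⟨(i : ℕ) + 1, by have := j.isLt; omega⟩ : Fin L) := Fin.ext hj
        rw [hjv, ← hbv]
        simp
      · subst hw
        have hi : (i : ℕ) ≠ 0 := by omega
        have hav : a = inr (inr (w, ⟨(i : ℕ) - 1, by omega⟩)) := by rw [ha, if_neg hi]
        have hjv : j = (⟨(i : ℕ) - 1, by omega⟩ : Fin L) := by
          apply Fin.ext
          simp only [Fin.val]
          omega
        rw [hjv, ← hav]
        simp
  calc (TG G H ρG ρH L).degree (inr (inr (w, i))) ≤ _ := Finset.card_le_card hsub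
    _ ≤ _ := Finset.card_insert_le _ _
    _ ≤ 2 := by simp

end Degrees

section Dist

lemma ediam_ne_top_of_connected {V : Type} [Fintype V] {Γ : SimpleGraph V}
    (h : Γ.Connected) : Γ.ediam ≠ ⊤ := by
  have : Nonempty V := h.nonempty
  obtain ⟨u, v, huv⟩ := Γ.exists_edist_eq_ediam_of_finite
  rw [← huv]
  exact (SimpleGraph.edist_ne_top_iff_reachable).mpr (h u v)

lemma one_le_diam_of_edge {V : Type} [Fintype V] {Γ : SimpleGraph V}
    (hconn : Γ.Connected) (he : Γ.edgeSet.Nonempty) : 1 ≤ Γ.diam := by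
  obtain ⟨e, he⟩ := he
  induction e with
  | h u v =>
    rw [SimpleGraph.mem_edgeSet] at he
    have h1 : (1 : ℕ∞) ≤ Γ.ediam := by
      rw [← SimpleGraph.edist_eq_one_iff_adj.mpr he]
      exact SimpleGraph.edist_le_ediam
    have := ENat.toNat_le_toNat h1 (ediam_ne_top_of_connected hconn)
    rw [SimpleGraph.diam]
    simpa using this

def homG : G →g TG G H ρG ρH L where
  toFun := inl
  map_rel' := fun hab => adj_inl_inl.mpr hab

def homH (w : {u : VG // u ≠ ρG}) : H →g TG G H ρG ρH L where
  toFun := fun h => inr (inl (w, h))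
  map_rel' := fun hab => adj_copy_copy.mpr ⟨rfl, hab⟩

lemma edist_inl_inl (hGconn : G.Connected) (u v : VG) :
    (TG G H ρG ρH L).edist (inl u) (inl v) ≤ G.edist u v := by
  obtain ⟨p, hp⟩ := (hGconn u v).exists_walk_length_eq_edist
  rw [← hp]
  calc (TG G H ρG ρH L).edist (inl u) (inl v) ≤ ((p.map homG).length : ℕ∞) :=
        SimpleGraph.edist_le _
    _ = (p.length : ℕ∞) := by rw [SimpleGraph.Walk.length_map]

lemma edist_copy (hHconn : H.Connected) (w : {u : VG // u ≠ ρG}) (h h' : VH) :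
    (TG G H ρG ρH L).edist (inr (inl (w, h))) (inr (inl (w, h'))) ≤ H.edist h h' := by
  obtain ⟨p, hp⟩ := (hHconn h h').exists_walk_length_eq_edist
  rw [← hp]
  calc (TG G H ρG ρH L).edist _ _ ≤ ((p.map (homH w)).length : ℕ∞) :=
        SimpleGraph.edist_le _
    _ = (p.length : ℕ∞) := by rw [SimpleGraph.Walk.length_map]

lemma edist_inl_tail (w : {u : VG // u ≠ ρG}) (i : ℕ) (hi : i < L) :
    (TG G H ρG ρH L).edist (inl (w : VG)) (inr (inr (w, ⟨i, hi⟩))) ≤ (i : ℕ∞) + 1 := by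
  induction i with
  | zero =>
    have : (TG G H ρG ρH L).Adj (inl (w : VG)) (inr (inr (w, ⟨0, hi⟩))) :=
      adj_inl_tail.mpr ⟨rfl, rfl⟩
    simpa using le_of_eq (SimpleGraph.edist_eq_one_iff_adj.mpr this)
  | succ i ih =>
    have hi' : i < L := by omega
    have htt : (TG G H ρG ρH L).Adj (inr (inr (w, (⟨i, hi'⟩ : Fin L))))
        (inr (inr (w, (⟨i + 1, hi⟩ : Fin L)))) := adj_tail_tail.mpr ⟨rfl, Or.inl rfl⟩
    calc (TG G H ρG ρH L).edist (inl (w : VG)) (inr (inr (w, ⟨i + 1, hi⟩)))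
        ≤ (TG G H ρG ρH L).edist (inl (w : VG)) (inr (inr (w, ⟨i, hi'⟩))) +
          (TG G H ρG ρH L).edist (inr (inr (w, ⟨i, hi'⟩))) (inr (inr (w, ⟨i + 1, hi⟩))) :=
        SimpleGraph.edist_triangle
      _ ≤ ((i : ℕ∞) + 1) + 1 :=
        add_le_add (ih hi') (le_of_eq (SimpleGraph.edist_eq_one_iff_adj.mpr htt))
      _ = ((i + 1 : ℕ) : ℕ∞) + 1 := by push_cast; ring

lemma edist_inl_copyroot (hL : 0 < L) (w : {u : VG // u ≠ ρG}) :
    (TG G H ρG ρH L).edist (inl (w : VG)) (inr (inl (w, ρH))) ≤ (L : ℕ∞) + 1 := by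
  have hlast : (TG G H ρG ρH L).Adj (inr (inr (w, (⟨L - 1, by omega⟩ : Fin L))))
      (inr (inl (w, ρH))) := (adj_copy_tail.mpr ⟨rfl, rfl, rfl⟩).symm
  calc (TG G H ρG ρH L).edist (inl (w : VG)) (inr (inl (w, ρH)))
      ≤ (TG G H ρG ρH L).edist (inl (w : VG)) (inr (inr (w, ⟨L - 1, by omega⟩))) +
        (TG G H ρG ρH L).edist (inr (inr (w, ⟨L - 1, by omega⟩))) (inr (inl (w, ρH))) :=
      SimpleGraph.edist_triangle
    _ ≤ (((L - 1 : ℕ) : ℕ∞) + 1) + 1 :=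
      add_le_add (edist_inl_tail w (L - 1) (by omega))
        (le_of_eq (SimpleGraph.edist_eq_one_iff_adj.mpr hlast))
    _ ≤ (L : ℕ∞) + 1 := by
      have : ((L - 1 : ℕ) : ℕ∞) + 1 = ((L - 1 + 1 : ℕ) : ℕ∞) := by push_cast; ring
      rw [this]
      have : L - 1 + 1 = L := by omega
      rw [this]

def proj : TreeVert VG VH ρG L → VG
  | inl u => u
  | inr (inl (w, _)) => (w : VG)
  | inr (inr (w, _)) => (w : VG)

lemma edist_proj (hL : 0 < L) (hHconn : H.Connected) (x : TreeVert VG VH ρG L) :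
    (TG G H ρG ρH L).edist (inl (proj x)) x ≤ (L : ℕ∞) + 1 + H.ediam := by
  rcases x with u | (⟨w, h⟩ | ⟨w, i⟩)
  · simp [proj]
  · show (TG G H ρG ρH L).edist (inl (w : VG)) (inr (inl (w, h))) ≤ (L : ℕ∞) + 1 + H.ediam
    calc (TG G H ρG ρH L).edist (inl (w : VG)) (inr (inl (w, h)))
        ≤ (TG G H ρG ρH L).edist (inl (w : VG)) (inr (inl (w, ρH))) +
          (TG G H ρG ρH L).edist (inr (inl (w, ρH))) (inr (inl (w, h))) :=
        SimpleGraph.edist_triangle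
      _ ≤ ((L : ℕ∞) + 1) + H.ediam := by
        refine add_le_add (edist_inl_copyroot hL w) ?_
        exact le_trans (edist_copy hHconn w ρH h) SimpleGraph.edist_le_ediam
  · show (TG G H ρG ρH L).edist (inl (w : VG)) (inr (inr (w, i))) ≤ (L : ℕ∞) + 1 + H.ediam
    have hib : ((i : ℕ) : ℕ∞) + 1 ≤ (L : ℕ∞) + 1 := by
      have hi := i.isLt
      have hle : ((i : ℕ) : ℕ∞) ≤ (L : ℕ∞) := by exact_mod_cast le_of_lt hi
      exact add_le_add_left hle 1
    have h1 : (TG G H ρG ρH L).edist (inl (w : VG)) (inr (inr (w, i))) ≤ ((i : ℕ) : ℕ∞) + 1 := by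
      have hiv : i = (⟨(i : ℕ), i.isLt⟩ : Fin L) := by apply Fin.ext; rfl
      rw [hiv]
      exact edist_inl_tail w i i.isLt
    exact le_trans h1 (le_trans hib (self_le_add_right _ _))

end Dist
end TreeAux

/-- The graph `𝔾(G;H)` of the "tree of `H`'s under `G`" construction, where each tail is a
path of length `2 diam(H)` (so it has `2 diam(H) - 1` internal vertices). -/
def treeGraph {VG VH : Type*} (G : SimpleGraph VG) (H : SimpleGraph VH) (ρG : VG) (ρH : VH) :
    SimpleGraph (TreeVert VG VH ρG (2 * H.diam - 1)) :=
  SimpleGraph.fromRel (treeRel G H ρG ρH (2 * H.diam - 1))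

/-- **Basic properties of the tree-of-graphs construction** (Lemma 4.3 / `lem:degrees`).

Let `(H,ρ_H)` and `(G,ρ_G)` be finite connected rooted graphs, each with at least one edge,
and let `𝔾 = 𝔾(G;H)` with root `ρ_𝔾 = ρ_G`.  Then
(1) `deg_𝔾(ρ_𝔾) = deg_G(ρ_G)`;
(2) `Δ_𝔾 ≤ max {Δ_H, Δ_G + 1, deg_H(ρ_H) + 1}`;
(3) `diam(𝔾) ≤ diam(G) + 6 diam(H)`. -/
theorem treeGraph_properties
    {VG VH : Type} [Fintype VG] [Fintype VH]
    (G : SimpleGraph VG) (H : SimpleGraph VH) (ρG : VG) (ρH : VH)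
    (hGconn : G.Connected) (hHconn : H.Connected)
    (hGedge : G.edgeSet.Nonempty) (hHedge : H.edgeSet.Nonempty) :
    (treeGraph G H ρG ρH).degree (Sum.inl ρG) = G.degree ρG ∧
    (treeGraph G H ρG ρH).maxDegree ≤
      max (max H.maxDegree (G.maxDegree + 1)) (H.degree ρH + 1) ∧
    (treeGraph G H ρG ρH).diam ≤ G.diam + 6 * H.diam := by
  have hH1 : 1 ≤ H.diam := TreeAux.one_le_diam_of_edge hHconn hHedge
  have hL : 0 < 2 * H.diam - 1 := by omega
  have hTG : treeGraph G H ρG ρH = TreeAux.TG G H ρG ρH (2 * H.diam - 1) := rfl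
  have hG1 : 1 ≤ G.maxDegree := by
    obtain ⟨e, he⟩ := hGedge
    induction e with
    | h u v =>
      rw [SimpleGraph.mem_edgeSet] at he
      exact le_trans (G.degree_pos_iff_exists_adj u |>.mpr ⟨v, he⟩)
        (G.degree_le_maxDegree u)
  refine ⟨?_, ?_, ?_⟩
  · rw [hTG]
    exact TreeAux.deg_root
  · rw [hTG]
    apply SimpleGraph.maxDegree_le_of_forall_degree_le
    intro x
    rcases x with u | (⟨w, h⟩ | ⟨w, i⟩)
    · by_cases hu : u = ρG
      · rw [hu, TreeAux.deg_root]
        exact le_trans (G.degree_le_maxDegree ρG)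
          (le_trans (Nat.le_succ _) (le_trans (le_max_right _ _) (le_max_left _ _)))
      · refine le_trans (TreeAux.deg_inl hL hu) ?_
        exact le_trans (Nat.add_le_add_right (G.degree_le_maxDegree u) 1)
          (le_trans (le_max_right _ _) (le_max_left _ _))
    · by_cases hh : h = ρH
      · subst hh
        exact le_trans (TreeAux.deg_copy_root hL) (le_max_right _ _)
      · exact le_trans (TreeAux.deg_copy hh)
          (le_trans (H.degree_le_maxDegree h)
            (le_trans (le_max_left _ _) (le_max_left _ _)))
    · refine le_trans TreeAux.deg_tail ?_
      have : 2 ≤ G.maxDegree + 1 := by omega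
      exact le_trans this (le_trans (le_max_right _ _) (le_max_left _ _))
  · have hHtop : H.ediam ≠ ⊤ := TreeAux.ediam_ne_top_of_connected hHconn
    have hGtop : G.ediam ≠ ⊤ := TreeAux.ediam_ne_top_of_connected hGconn
    have hHed : H.ediam = (H.diam : ℕ∞) := (ENat.coe_toNat hHtop).symm
    have hGed : G.ediam = (G.diam : ℕ∞) := (ENat.coe_toNat hGtop).symm
    set L := 2 * H.diam - 1 with hLdef
    have hcast : ((L : ℕ∞) + 1 + H.ediam) = ((3 * H.diam : ℕ) : ℕ∞) := by
      rw [hHed]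
      have h3 : L + 1 + H.diam = 3 * H.diam := by omega
      rw [← h3]
      push_cast
      ring
    have hproj : ∀ x : TreeVert VG VH ρG L,
        (TreeAux.TG G H ρG ρH L).edist (Sum.inl (TreeAux.proj x)) x ≤ ((3 * H.diam : ℕ) : ℕ∞) :=
      fun x => le_of_le_of_eq (TreeAux.edist_proj hL hHconn x) hcast
    have hmain : ∀ x y : TreeVert VG VH ρG L,
        (TreeAux.TG G H ρG ρH L).edist x y ≤ ((G.diam + 6 * H.diam : ℕ) : ℕ∞) := by
      intro x y
      calc (TreeAux.TG G H ρG ρH L).edist x y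
          ≤ (TreeAux.TG G H ρG ρH L).edist x (Sum.inl (TreeAux.proj x)) +
            (TreeAux.TG G H ρG ρH L).edist (Sum.inl (TreeAux.proj x)) y :=
          SimpleGraph.edist_triangle
        _ ≤ (TreeAux.TG G H ρG ρH L).edist x (Sum.inl (TreeAux.proj x)) +
            ((TreeAux.TG G H ρG ρH L).edist (Sum.inl (TreeAux.proj x))
              (Sum.inl (TreeAux.proj y)) +
             (TreeAux.TG G H ρG ρH L).edist (Sum.inl (TreeAux.proj y)) y) :=
          add_le_add_right SimpleGraph.edist_triangle _
        _ ≤ ((3 * H.diam : ℕ) : ℕ∞) + (((G.diam : ℕ) : ℕ∞) + ((3 * H.diam : ℕ) : ℕ∞)) := by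
          refine add_le_add ?_ (add_le_add ?_ (hproj y))
          · rw [SimpleGraph.edist_comm]
            exact hproj x
          · refine le_trans (TreeAux.edist_inl_inl hGconn _ _) ?_
            rw [← hGed]
            exact SimpleGraph.edist_le_ediam
        _ = ((G.diam + 6 * H.diam : ℕ) : ℕ∞) := by push_cast; ring
    have hediam : (treeGraph G H ρG ρH).ediam ≤ ((G.diam + 6 * H.diam : ℕ) : ℕ∞) := by
      rw [hTG]
      exact SimpleGraph.ediam_le_of_edist_le hmain
    have := ENat.toNat_le_toNat hediam (ENat.coe_ne_top _)
    rw [ENat.toNat_coe] at this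
    exact this

end
end
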